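/- For every n ≥ 1 and every f : {-1,1}^n → ℝ, the log-Sobolev inequality D(f,f) ≥ (1/n)·Ent(f²) holds; i.e., the log-Sobolev constant of the discrete cube {-1,1}^n is at least 1/n. -/

import Mathlib

noncomputable section

/-- The real value `±1` associated with a Boolean coordinate (`true ↦ 1`, `false ↦ -1`). -/
def sgn (b : Bool) : ℝ := if b then 1 else -1

/-- Expectation over the uniform probability measure on the hypercube `{-1,1}^n`,
identified with `Fin n → Bool`. -/
def cubeExpect {n : ℕ} (f : (Fin n → Bool) → ℝ) : ℝ :=
  (∑ x : Fin n → Bool, f x) / 2 ^ n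

/-- The Fourier character `χ_S(x) = ∏_{i ∈ S} x_i`. -/
def chi {n : ℕ} (S : Finset (Fin n)) (x : Fin n → Bool) : ℝ :=
  ∏ i ∈ S, sgn (x i)

/-- The Fourier coefficient `f̂(S) = E[f(x) χ_S(x)]`. -/
def fourierCoef {n : ℕ} (f : (Fin n → Bool) → ℝ) (S : Finset (Fin n)) : ℝ :=
  cubeExpect fun x => f x * chi S x

/-- The noise operator `T_ρ f = Σ_S ρ^{|S|} f̂(S) χ_S` (with `0^0 = 1`). -/
def noiseOp {n : ℕ} (ρ : ℝ) (f : (Fin n → Bool) → ℝ) (x : Fin n → Bool) : ℝ :=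
  ∑ S : Finset (Fin n), ρ ^ S.card * fourierCoef f S * chi S x

/-- The normalized `ℓ_p` norm `‖f‖_p = (E |f|^p)^{1/p}`. -/
def cubeNorm {n : ℕ} (p : ℝ) (f : (Fin n → Bool) → ℝ) : ℝ :=
  (cubeExpect fun x => |f x| ^ p) ^ (1 / p)

/-- `x` with its `i`-th coordinate negated. -/
def flipAt {n : ℕ} (x : Fin n → Bool) (i : Fin n) : Fin n → Bool :=
  Function.update x i (!(x i))

/-- The Dirichlet form `D(f,g) = ½ E_{x,i}[(f(x) − f(x^{⊕i}))(g(x) − g(x^{⊕i}))]`,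
with `x` uniform on the cube and `i` uniform on the coordinates. -/
def dirichletForm {n : ℕ} (f g : (Fin n → Bool) → ℝ) : ℝ :=
  (1/2) * cubeExpect fun x =>
    (∑ i : Fin n, (f x - f (flipAt x i)) * (g x - g (flipAt x i))) / n

/-- The entropy `Ent(g) = E[g log g] − (E g) log (E g)` (with `0 log 0 = 0`,
as `Real.log 0 = 0`). -/
def cubeEntropy {n : ℕ} (g : (Fin n → Bool) → ℝ) : ℝ :=
  cubeExpect (fun x => g x * Real.log (g x)) - cubeExpect g * Real.log (cubeExpect g)

/-- The variance `Var(f) = E[f²] − (E f)²`. -/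
def cubeVar {n : ℕ} (f : (Fin n → Bool) → ℝ) : ℝ :=
  cubeExpect (fun x => f x ^ 2) - (cubeExpect f) ^ 2

/-- The influence of coordinate `i`: `Inf_i(f) = Σ_{S ∋ i} f̂(S)²`. -/
def influence {n : ℕ} (i : Fin n) (f : (Fin n → Bool) → ℝ) : ℝ :=
  ∑ S ∈ Finset.univ.filter (fun S : Finset (Fin n) => i ∈ S), fourierCoef f S ^ 2


open Real in
/-- Inner derivative inequality: `artanh r ≤ r/√(1-r²)` on `[0,1)`. -/
lemma lsi_inner_ineq {r : ℝ} (h0 : 0 ≤ r) (h1 : r < 1) :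
    (Real.log (1+r) - Real.log (1-r))/2 ≤ r / Real.sqrt (1-r^2) := by
  set H : ℝ → ℝ := fun x => x / Real.sqrt (1-x^2) - (Real.log (1+x) - Real.log (1-x))/2 with hH
  have key : ∀ x ∈ Set.Ioo (-1:ℝ) 1,
      HasDerivAt H (1/(Real.sqrt (1-x^2))^3 - 1/(1-x^2)) x := by
    intro x hx
    obtain ⟨hxm, hx1⟩ := hx
    have hpos : 0 < 1 - x^2 := by nlinarith
    set s := Real.sqrt (1-x^2) with hsdef
    have hs : 0 < s := Real.sqrt_pos.2 hpos
    have hsq : s^2 = 1-x^2 := Real.sq_sqrt hpos.le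
    have d1 : HasDerivAt (fun x : ℝ => 1 - x^2) (-(2*x)) x := by
      simpa using ((hasDerivAt_pow 2 x).const_sub 1)
    have d2 : HasDerivAt (fun x : ℝ => Real.sqrt (1-x^2)) (-(2*x) / (2*s)) x :=
      d1.sqrt hpos.ne'
    have d3 : HasDerivAt (fun x : ℝ => x / Real.sqrt (1-x^2))
        ((1 * s - x * (-(2*x) / (2*s))) / s^2) x :=
      (hasDerivAt_id x).div d2 hs.ne'
    have d4 : HasDerivAt (fun x : ℝ => Real.log (1+x)) (1/(1+x)) x := by
      have : HasDerivAt (fun x : ℝ => 1 + x) 1 x := by simpa using (hasDerivAt_id x).const_add 1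
      exact this.log (by nlinarith)
    have d5 : HasDerivAt (fun x : ℝ => Real.log (1-x)) ((-1)/(1-x)) x := by
      have : HasDerivAt (fun x : ℝ => 1 - x) (-1) x := by simpa using (hasDerivAt_id x).const_sub 1
      exact this.log (by nlinarith)
    have hx2 : s^2 + x^2 = 1 := by rw [hsq]; ring
    have eA : (1 * s - x * (-(2*x)/(2*s)))/s^2 = 1/s^3 := by
      rw [show (1:ℝ)*s - x * (-(2*x)/(2*s)) = (s^2 + x^2)/s by field_simp; ring, hx2]
      field_simp
    have eB : (1/(1+x) - (-1)/(1-x))/2 = 1/(1-x^2) := by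
      have h1x : (1:ℝ) + x ≠ 0 := by nlinarith
      have h2x : (1:ℝ) - x ≠ 0 := by nlinarith
      field_simp
      ring
    have := d3.sub ((d4.sub d5).div_const 2)
    rw [eA, eB] at this
    exact this
  have hmono : MonotoneOn H (Set.Icc 0 r) := by
    apply monotoneOn_of_deriv_nonneg (convex_Icc 0 r)
    · intro x hx
      exact ((key x ⟨by linarith [hx.1], lt_of_le_of_lt hx.2 h1⟩).continuousAt).continuousWithinAt
    · intro x hx
      rw [interior_Icc] at hx
      exact ((key x ⟨by linarith [hx.1],
        lt_of_lt_of_le hx.2 (le_of_lt h1)⟩).differentiableAt).differentiableWithinAt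
    · intro x hx
      rw [interior_Icc] at hx
      have hX : x ∈ Set.Ioo (-1:ℝ) 1 := ⟨by linarith [hx.1], lt_of_lt_of_le hx.2 h1.le⟩
      rw [(key x hX).deriv]
      have hpos : 0 < 1 - x^2 := by
        obtain ⟨a,b⟩ := hX; nlinarith
      have hs : 0 < Real.sqrt (1-x^2) := Real.sqrt_pos.2 hpos
      have hsq : Real.sqrt (1-x^2)^2 = 1-x^2 := Real.sq_sqrt hpos.le
      have hsle : Real.sqrt (1-x^2) ≤ 1 := Real.sqrt_le_one.2 (by nlinarith)
      rw [sub_nonneg, div_le_div_iff₀ hpos (by positivity)]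
      calc 1 * Real.sqrt (1-x^2)^3 = (1-x^2) * Real.sqrt (1-x^2) := by rw [pow_succ, hsq]; ring
        _ ≤ (1-x^2) * 1 := by nlinarith
        _ = 1 * (1-x^2) := by ring
  have h00 : H 0 = 0 := by simp [hH]
  have := hmono (Set.mem_Icc.2 ⟨le_refl 0, h0⟩) (Set.mem_Icc.2 ⟨h0, le_refl r⟩) h0
  rw [h00] at this
  simpa [hH, sub_nonneg] using this

open Real in
/-- Outer inequality: the two-point entropy bound in normalized form. -/
lemma lsi_LR_ineq {r : ℝ} (h0 : 0 ≤ r) (h1 : r < 1) :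
    ((1+r)*Real.log (1+r) + (1-r)*Real.log (1-r))/2 ≤ 1 - Real.sqrt (1-r^2) := by
  set F : ℝ → ℝ := fun x =>
    1 - Real.sqrt (1-x^2) - ((1+x)*Real.log (1+x) + (1-x)*Real.log (1-x))/2 with hF
  have key : ∀ x ∈ Set.Ioo (-1:ℝ) 1,
      HasDerivAt F (x / Real.sqrt (1-x^2) - (Real.log (1+x) - Real.log (1-x))/2) x := by
    intro x hx
    obtain ⟨hxm, hx1⟩ := hx
    have hpos : 0 < 1 - x^2 := by nlinarith
    have hs : 0 < Real.sqrt (1-x^2) := Real.sqrt_pos.2 hpos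
    have h1x : (0:ℝ) < 1 + x := by nlinarith
    have h2x : (0:ℝ) < 1 - x := by nlinarith
    have d1 : HasDerivAt (fun x : ℝ => 1 - x^2) (-(2*x)) x := by
      simpa using ((hasDerivAt_pow 2 x).const_sub 1)
    have d2 : HasDerivAt (fun x : ℝ => 1 - Real.sqrt (1-x^2))
        (-(-(2*x) / (2*Real.sqrt (1-x^2)))) x :=
      (d1.sqrt hpos.ne').const_sub 1
    have dp : HasDerivAt (fun x : ℝ => 1 + x) 1 x := by simpa using (hasDerivAt_id x).const_add 1
    have dm : HasDerivAt (fun x : ℝ => 1 - x) (-1) x := by simpa using (hasDerivAt_id x).const_sub 1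
    have d4 : HasDerivAt (fun x : ℝ => (1+x)*Real.log (1+x))
        (1 * Real.log (1+x) + (1+x) * (1/(1+x))) x := dp.mul (dp.log h1x.ne')
    have d5 : HasDerivAt (fun x : ℝ => (1-x)*Real.log (1-x))
        ((-1) * Real.log (1-x) + (1-x) * ((-1)/(1-x))) x := dm.mul (dm.log h2x.ne')
    have := d2.sub ((d4.add d5).div_const 2)
    refine this.congr_deriv ?_
    field_simp
    ring
  have hmono : MonotoneOn F (Set.Icc 0 r) := by
    apply monotoneOn_of_deriv_nonneg (convex_Icc 0 r)
    · intro x hx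
      exact ((key x ⟨by linarith [hx.1], lt_of_le_of_lt hx.2 h1⟩).continuousAt).continuousWithinAt
    · intro x hx
      rw [interior_Icc] at hx
      exact ((key x ⟨by linarith [hx.1],
        lt_of_lt_of_le hx.2 h1.le⟩).differentiableAt).differentiableWithinAt
    · intro x hx
      rw [interior_Icc] at hx
      have hX : x ∈ Set.Ioo (-1:ℝ) 1 := ⟨by linarith [hx.1], lt_of_lt_of_le hx.2 h1.le⟩
      rw [(key x hX).deriv, sub_nonneg]
      exact lsi_inner_ineq (le_of_lt hx.1) hX.2
  have h00 : F 0 = 0 := by simp [hF]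
  have := hmono (Set.mem_Icc.2 ⟨le_refl 0, h0⟩) (Set.mem_Icc.2 ⟨h0, le_refl r⟩) h0
  rw [h00] at this
  simpa [hF, sub_nonneg] using this

open Real in
/-- Two-point entropy inequality. -/
lemma lsi_ent2_le (u v : ℝ) (hu : 0 ≤ u) (hv : 0 ≤ v) :
    (u * Real.log u + v * Real.log v)/2 - ((u+v)/2) * Real.log ((u+v)/2)
      ≤ (u+v)/2 - Real.sqrt (u*v) := by
  wlog hvu : v ≤ u generalizing u v
  · have := this v u hv hu (le_of_not_ge hvu)
    calc (u * Real.log u + v * Real.log v)/2 - ((u+v)/2) * Real.log ((u+v)/2)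
        = (v * Real.log v + u * Real.log u)/2 - ((v+u)/2) * Real.log ((v+u)/2) := by ring_nf
      _ ≤ (v+u)/2 - Real.sqrt (v*u) := this
      _ = (u+v)/2 - Real.sqrt (u*v) := by rw [mul_comm v u]; ring_nf
  rcases eq_or_lt_of_le hv with hv0 | hv0
  · rcases eq_or_lt_of_le hu with hu0 | hu0
    · simp [← hu0, ← hv0]
    · rw [← hv0]
      have hu2 : (0:ℝ) < u/2 := by linarith
      have hlog : Real.log (u/2) = Real.log u - Real.log 2 := Real.log_div hu0.ne' two_ne_zero
      have h2 : Real.log 2 ≤ 1 := by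
        have := Real.log_le_sub_one_of_pos (by norm_num : (0:ℝ) < 2)
        linarith
      simp only [add_zero, mul_zero, zero_mul, zero_add, Real.log_zero, Real.sqrt_zero]
      rw [hlog]
      nlinarith
  · have hu0 : 0 < u := lt_of_lt_of_le hv0 hvu
    set m : ℝ := (u+v)/2 with hm
    have hm0 : 0 < m := by positivity
    set r : ℝ := (u-v)/(u+v) with hr
    have hr0 : 0 ≤ r := div_nonneg (by linarith) (by linarith)
    have hr1 : r < 1 := by
      rw [hr, div_lt_one (by linarith)]
      linarith
    have h1r : (0:ℝ) < 1 + r := by linarith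
    have h2r : (0:ℝ) < 1 - r := by linarith
    have hu' : u = m * (1+r) := by
      rw [hm, hr]; field_simp; ring
    have hv' : v = m * (1-r) := by
      rw [hm, hr]; field_simp; ring
    have hsqrt : Real.sqrt (u*v) = m * Real.sqrt (1-r^2) := by
      rw [hu', hv', show m*(1+r) * (m*(1-r)) = m^2 * (1-r^2) by ring,
        Real.sqrt_mul (sq_nonneg m), Real.sqrt_sq hm0.le]
    have hlogu : Real.log u = Real.log m + Real.log (1+r) := by
      rw [hu', Real.log_mul hm0.ne' h1r.ne']
    have hlogv : Real.log v = Real.log m + Real.log (1-r) := by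
      rw [hv', Real.log_mul hm0.ne' h2r.ne']
    have main := lsi_LR_ineq hr0 hr1
    have hmain := mul_le_mul_of_nonneg_left main hm0.le
    calc (u * Real.log u + v * Real.log v)/2 - ((u+v)/2) * Real.log ((u+v)/2)
        = m * (((1+r)*Real.log (1+r) + (1-r)*Real.log (1-r))/2) := by
          rw [hlogu, hlogv, ← hm]
          nth_rewrite 1 [hu']
          nth_rewrite 1 [hv']
          ring
      _ ≤ m * (1 - Real.sqrt (1-r^2)) := hmain
      _ = (u+v)/2 - Real.sqrt (u*v) := by rw [hsqrt, ← hm]; ring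

lemma lsi_cubeExpect_succ {n : ℕ} (F : (Fin (n+1) → Bool) → ℝ) :
    cubeExpect F = (cubeExpect (fun y => F (Fin.cons true y))
      + cubeExpect (fun y => F (Fin.cons false y)))/2 := by
  unfold cubeExpect
  have h : ∑ p : Bool × (Fin n → Bool), F (Fin.cons p.1 p.2) = ∑ x, F x :=
    Fintype.sum_equiv (Fin.consEquiv fun _ => Bool) _ _ (fun p => rfl)
  rw [← h, Fintype.sum_prod_type, Fintype.sum_bool, pow_succ]
  have h2 : (2:ℝ)^n ≠ 0 := by positivity
  field_simp

lemma lsi_cubeExpect_add {n : ℕ} (f g : (Fin n → Bool) → ℝ) :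
    cubeExpect (fun x => f x + g x) = cubeExpect f + cubeExpect g := by
  unfold cubeExpect
  rw [Finset.sum_add_distrib, add_div]

lemma lsi_cubeExpect_nonneg {n : ℕ} {f : (Fin n → Bool) → ℝ} (h : ∀ x, 0 ≤ f x) :
    0 ≤ cubeExpect f :=
  div_nonneg (Finset.sum_nonneg fun x _ => h x) (by positivity)

lemma lsi_cubeExpect_sq_sub {n : ℕ} (p q : (Fin n → Bool) → ℝ) :
    cubeExpect (fun y => (p y - q y)^2)
      = cubeExpect (fun y => p y^2) + cubeExpect (fun y => q y^2)
        - 2 * cubeExpect (fun y => p y * q y) := by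
  unfold cubeExpect
  have hsum : ∑ y : Fin n → Bool, (p y - q y)^2
      = ∑ y : Fin n → Bool, p y^2 + ∑ y : Fin n → Bool, q y^2
        - 2 * ∑ y : Fin n → Bool, p y * q y := by
    rw [← Finset.sum_add_distrib, Finset.mul_sum, ← Finset.sum_sub_distrib]
    apply Finset.sum_congr rfl
    intros; ring
  rw [hsum]; ring

lemma lsi_cubeExpect_mul_le_sqrt {n : ℕ} (p q : (Fin n → Bool) → ℝ) :
    cubeExpect (fun y => p y * q y)
      ≤ Real.sqrt (cubeExpect (fun y => p y^2) * cubeExpect (fun y => q y^2)) := by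
  unfold cubeExpect
  have h2 : (0:ℝ) < 2^n := by positivity
  have hp : 0 ≤ ∑ y : Fin n → Bool, p y^2 := Finset.sum_nonneg fun y _ => sq_nonneg _
  have hq : 0 ≤ ∑ y : Fin n → Bool, q y^2 := Finset.sum_nonneg fun y _ => sq_nonneg _
  have cs := Real.sum_mul_le_sqrt_mul_sqrt (Finset.univ : Finset (Fin n → Bool)) p q
  have hR : Real.sqrt ((∑ y : Fin n → Bool, p y^2)/2^n * ((∑ y : Fin n → Bool, q y^2)/2^n))
      = Real.sqrt (∑ y : Fin n → Bool, p y^2) * Real.sqrt (∑ y : Fin n → Bool, q y^2) / 2^n := by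
    rw [Real.sqrt_mul (div_nonneg hp h2.le), Real.sqrt_div hp, Real.sqrt_div hq,
      div_mul_div_comm, Real.mul_self_sqrt h2.le]
  rw [hR]
  gcongr

lemma lsi_flipAt_cons_zero {n : ℕ} (b : Bool) (y : Fin n → Bool) :
    flipAt (Fin.cons b y) 0 = Fin.cons (!b) y := by
  unfold flipAt
  rw [Fin.cons_zero, Fin.update_cons_zero]

lemma lsi_flipAt_cons_succ {n : ℕ} (b : Bool) (y : Fin n → Bool) (i : Fin n) :
    flipAt (Fin.cons b y) i.succ = Fin.cons b (flipAt y i) := by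
  unfold flipAt
  rw [Fin.cons_succ, Fin.cons_update]

/-- Main induction: `Ent(f²) ≤ ½ E[Σᵢ (f(x) − f(x^{⊕i}))²]`. -/
lemma lsi_key_ineq : ∀ (n : ℕ) (f : (Fin n → Bool) → ℝ),
    cubeEntropy (fun x => f x ^ 2)
      ≤ (1/2) * cubeExpect (fun x => ∑ i, (f x - f (flipAt x i))^2) := by
  intro n
  induction n with
  | zero =>
    intro f
    have h1 : ∀ g : (Fin 0 → Bool) → ℝ, cubeExpect g = g default := by
      intro g
      unfold cubeExpect
      simp
      exact congrArg g (Subsingleton.elim _ _)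
    unfold cubeEntropy
    rw [h1, h1, h1]
    simp
  | succ n ih =>
    intro f
    have e2 := lsi_cubeExpect_succ (fun x => f x ^ 2 * Real.log (f x ^ 2))
    have e1 := lsi_cubeExpect_succ (fun x => f x ^ 2)
    set fT : (Fin n → Bool) → ℝ := fun y => f (Fin.cons true y) with hfT
    set fF : (Fin n → Bool) → ℝ := fun y => f (Fin.cons false y) with hfF
    set U : ℝ := cubeExpect (fun y => fT y ^ 2) with hU
    set V : ℝ := cubeExpect (fun y => fF y ^ 2) with hV
    have hU0 : 0 ≤ U := lsi_cubeExpect_nonneg (fun y => sq_nonneg _)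
    have hV0 : 0 ≤ V := lsi_cubeExpect_nonneg (fun y => sq_nonneg _)
    have eEnt : cubeEntropy (fun x => f x ^ 2)
        = (cubeEntropy (fun y => fT y ^ 2) + cubeEntropy (fun y => fF y ^ 2))/2
          + ((U * Real.log U + V * Real.log V)/2 - ((U+V)/2) * Real.log ((U+V)/2)) := by
      unfold cubeEntropy
      rw [e1, e2, ← hU, ← hV]
      ring
    have eR0 : ∀ (b : Bool) (y : Fin n → Bool),
        (∑ i : Fin (n+1), (f (Fin.cons b y) - f (flipAt (Fin.cons b y) i))^2)
        = (f (Fin.cons b y) - f (Fin.cons (!b) y))^2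
          + ∑ i : Fin n, (f (Fin.cons b y) - f (Fin.cons b (flipAt y i)))^2 := by
      intro b y
      rw [Fin.sum_univ_succ, lsi_flipAt_cons_zero]
      congr 1
      apply Finset.sum_congr rfl
      intro i _
      rw [lsi_flipAt_cons_succ]
    have eT : cubeExpect (fun y => ∑ i : Fin (n+1),
          (f (Fin.cons true y) - f (flipAt (Fin.cons true y) i))^2)
        = cubeExpect (fun y => (fT y - fF y)^2)
          + cubeExpect (fun y => ∑ i : Fin n, (fT y - fT (flipAt y i))^2) := by
      rw [← lsi_cubeExpect_add]
      congr 1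
      funext y
      simpa using eR0 true y
    have eF : cubeExpect (fun y => ∑ i : Fin (n+1),
          (f (Fin.cons false y) - f (flipAt (Fin.cons false y) i))^2)
        = cubeExpect (fun y => (fF y - fT y)^2)
          + cubeExpect (fun y => ∑ i : Fin n, (fF y - fF (flipAt y i))^2) := by
      rw [← lsi_cubeExpect_add]
      congr 1
      funext y
      simpa using eR0 false y
    have eR : cubeExpect (fun x => ∑ i : Fin (n+1), (f x - f (flipAt x i))^2)
        = ( (cubeExpect (fun y => (fT y - fF y)^2)
              + cubeExpect (fun y => ∑ i : Fin n, (fT y - fT (flipAt y i))^2))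
          + (cubeExpect (fun y => (fF y - fT y)^2)
              + cubeExpect (fun y => ∑ i : Fin n, (fF y - fF (flipAt y i))^2)) )/2 := by
      rw [lsi_cubeExpect_succ (fun x => ∑ i : Fin (n+1), (f x - f (flipAt x i))^2)]
      rw [eT, eF]
    have hsym : cubeExpect (fun y => (fF y - fT y)^2)
        = cubeExpect (fun y => (fT y - fF y)^2) := by
      congr 1
      funext y
      ring
    have hA : cubeExpect (fun y => (fT y - fF y)^2)
        = U + V - 2 * cubeExpect (fun y => fT y * fF y) := lsi_cubeExpect_sq_sub fT fF
    have hCS : cubeExpect (fun y => fT y * fF y) ≤ Real.sqrt (U * V) :=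
      lsi_cubeExpect_mul_le_sqrt fT fF
    have hBr : (U * Real.log U + V * Real.log V)/2 - ((U+V)/2) * Real.log ((U+V)/2)
        ≤ (1/2) * cubeExpect (fun y => (fT y - fF y)^2) := by
      have := lsi_ent2_le U V hU0 hV0
      rw [hA]
      linarith
    have ihT := ih fT
    have ihF := ih fF
    rw [eEnt, eR, hsym]
    linarith

/-- **Log-Sobolev inequality for the discrete cube**: for every `n ≥ 1` and every
`f : {-1,1}^n → ℝ`, `D(f,f) ≥ (1/n)·Ent(f²)`. -/
theorem cube_logSobolev (n : ℕ) (hn : 1 ≤ n) (f : (Fin n → Bool) → ℝ) :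
    (1 / (n : ℝ)) * cubeEntropy (fun x => f x ^ 2) ≤ dirichletForm f f := by
  have hn' : (0:ℝ) < n := by exact_mod_cast Nat.lt_of_lt_of_le Nat.zero_lt_one hn
  have hkey := lsi_key_ineq n f
  unfold dirichletForm
  have hED : cubeExpect (fun x =>
        (∑ i, (f x - f (flipAt x i)) * (f x - f (flipAt x i))) / (n:ℝ))
      = cubeExpect (fun x => ∑ i, (f x - f (flipAt x i))^2) / n := by
    unfold cubeExpect
    have hpt : ∀ x : Fin n → Bool,
        (∑ i, (f x - f (flipAt x i)) * (f x - f (flipAt x i)))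
          = ∑ i, (f x - f (flipAt x i))^2 := by
      intro x
      apply Finset.sum_congr rfl
      intros; ring
    simp_rw [hpt]
    rw [← Finset.sum_div, div_right_comm]
  rw [hED]
  calc (1 / (n : ℝ)) * cubeEntropy (fun x => f x ^ 2)
      ≤ (1 / (n : ℝ)) * ((1/2) * cubeExpect (fun x => ∑ i, (f x - f (flipAt x i))^2)) := by
        apply mul_le_mul_of_nonneg_left hkey (by positivity)
    _ = 1/2 * (cubeExpect (fun x => ∑ i, (f x - f (flipAt x i))^2) / n) := by ring
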